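/- arXiv:0709.1047 — 4 statements merged into one kernel-verified Lean document; each statement's English description precedes it below -/
import Mathlib

section
/- Let R be an oriented graph on N vertices with δ(R) + δ⁺(R) + δ⁻(R) ≥ (3/2 + α)N for some α > 0. If X is a nonempty subset of the vertices of R with |X| ≤ (1 − α)N, then |N⁺(X)| ≥ |X| + αN/2, where N⁺(X) is the set of all out-neighbours of vertices in X. -/
open Finset
open scoped Classical

noncomputable section

variable {V : Type*} [Fintype V]

/-- The outdegree of `x` in the digraph `G`. -/
def outDeg (G : V → V → Prop) (x : V) : ℕ := (univ.filter fun y => G x y).card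

/-- The indegree of `x` in the digraph `G`. -/
def inDeg (G : V → V → Prop) (x : V) : ℕ := (univ.filter fun y => G y x).card

/-- The (total) degree of `x`: the number of vertices joined to `x` by an edge. -/
def deg (G : V → V → Prop) (x : V) : ℕ := (univ.filter fun y => G x y ∨ G y x).card

/-- The minimum outdegree `δ⁺(G)`. -/
def minOutDeg (G : V → V → Prop) [Nonempty V] : ℕ := univ.inf' univ_nonempty (outDeg G)

/-- The minimum indegree `δ⁻(G)`. -/
def minInDeg (G : V → V → Prop) [Nonempty V] : ℕ := univ.inf' univ_nonempty (inDeg G)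

/-- The minimum degree `δ(G)`. -/
def minDeg (G : V → V → Prop) [Nonempty V] : ℕ := univ.inf' univ_nonempty (deg G)

/-- An oriented graph: no loops and no pair of antiparallel edges. -/
def Oriented (G : V → V → Prop) : Prop := (∀ x, ¬ G x x) ∧ ∀ x y, G x y → ¬ G y x

/-- The out-neighbourhood `N⁺(X)` of a set of vertices. -/
def outNbhd (G : V → V → Prop) (X : Finset V) : Finset V :=
  univ.filter fun y => ∃ x ∈ X, G x y

/-- In an oriented graph, the number of (directed) edges inside a finite set `D`
is at most `D.card * (D.card - 1) / 2`, in the form `2e + |D| ≤ |D|^2`. -/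
lemma auxPairs (G : V → V → Prop) (hor : Oriented G) (D : Finset V) :
    2 * ((D ×ˢ D).filter fun p => G p.1 p.2).card + D.card ≤ D.card * D.card := by
  classical
  set E := (D ×ˢ D).filter fun p => G p.1 p.2 with hE
  have himg : (E.image Prod.swap).card = E.card :=
    Finset.card_image_of_injective _ Prod.swap_injective
  have hdisj : Disjoint E (E.image Prod.swap) := by
    rw [Finset.disjoint_left]
    rintro ⟨x, y⟩ hxy hsw
    simp only [hE, Finset.mem_filter, Finset.mem_image, Finset.mem_product] at hxy hsw
    obtain ⟨⟨u, v⟩, ⟨_, hG⟩, heq⟩ := hsw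
    have hu : u = y ∧ v = x := by
      simpa [Prod.ext_iff, Prod.swap, and_comm] using heq
    obtain ⟨rfl, rfl⟩ := hu
    exact hor.2 _ _ hxy.2 hG
  have hsub : E ∪ E.image Prod.swap ⊆ D.offDiag := by
    intro p hp
    rcases Finset.mem_union.1 hp with hp | hp
    · obtain ⟨hpd, hG⟩ := Finset.mem_filter.1 hp
      have hmem := Finset.mem_product.1 hpd
      refine Finset.mem_offDiag.2 ⟨hmem.1, hmem.2, ?_⟩
      intro hne
      exact hor.1 p.1 (by rw [hne] at hG ⊢; exact hG)
    · obtain ⟨q, hq, rfl⟩ := Finset.mem_image.1 hp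
      obtain ⟨hpd, hG⟩ := Finset.mem_filter.1 hq
      have hmem := Finset.mem_product.1 hpd
      refine Finset.mem_offDiag.2 ⟨hmem.2, hmem.1, ?_⟩
      intro hne
      simp only [Prod.fst_swap, Prod.snd_swap] at hne
      exact hor.1 q.1 (by rw [← hne] at hG ⊢; exact hG)
  have hcard := Finset.card_le_card hsub
  rw [Finset.card_union_of_disjoint hdisj, himg, Finset.offDiag_card] at hcard
  have hle : D.card ≤ D.card * D.card := by
    rcases Nat.eq_zero_or_pos D.card with h | h
    · simp [h]
    · exact Nat.le_mul_of_pos_left _ h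
  have h2 := Nat.add_le_add_right hcard D.card
  rw [Nat.sub_add_cancel hle] at h2
  linarith

lemma auxRow (G : V → V → Prop) (D C : Finset V) :
    ((D ×ˢ C).filter fun p => G p.1 p.2).card
      = ∑ y ∈ D, (C.filter fun z => G y z).card := by
  classical
  calc ((D ×ˢ C).filter fun p => G p.1 p.2).card
      = ∑ p ∈ D ×ˢ C, if G p.1 p.2 then 1 else 0 := Finset.card_filter _ _
    _ = ∑ y ∈ D, ∑ z ∈ C, if G y z then 1 else 0 := Finset.sum_product _ _ _
    _ = ∑ y ∈ D, (C.filter fun z => G y z).card := by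
        simp only [Finset.card_filter]

/-- Key counting bound: if every vertex of `D` has `k ≤ (out-neighbours in D) + |Q|`,
then `|D| * (2k+1) ≤ |D| * (|D| + 2|Q|)`. -/
lemma keyCount (G : V → V → Prop) (hor : Oriented G) (D Q : Finset V) (k : ℕ)
    (hk : ∀ y ∈ D, k ≤ (D.filter fun z => G y z).card + Q.card) :
    D.card * (2 * k + 1) ≤ D.card * (D.card + 2 * Q.card) := by
  classical
  have hsum : D.card * k ≤ ∑ y ∈ D, ((D.filter fun z => G y z).card + Q.card) := by
    calc D.card * k = ∑ _y ∈ D, k := by rw [Finset.sum_const, smul_eq_mul]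
    _ ≤ _ := Finset.sum_le_sum hk
  rw [Finset.sum_add_distrib, Finset.sum_const, smul_eq_mul] at hsum
  have hpair := auxPairs G hor D
  rw [auxRow G D D] at hpair
  have hgoal1 : D.card * (2 * k + 1) = 2 * (D.card * k) + D.card := by ring
  have hgoal2 : D.card * (D.card + 2 * Q.card)
      = D.card * D.card + 2 * (D.card * Q.card) := by ring
  rw [hgoal1, hgoal2]
  linarith

/-- Expansion from the degree condition. -/
theorem stmt2 [Nonempty V] (G : V → V → Prop) (α : ℝ) (hα : 0 < α)
    (hor : Oriented G)
    (hdeg : (3 / 2 + α) * (Fintype.card V : ℝ) ≤ (minDeg G + minOutDeg G + minInDeg G : ℝ))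
    (X : Finset V) (hX : X.Nonempty)
    (hXle : (X.card : ℝ) ≤ (1 - α) * (Fintype.card V : ℝ)) :
    (X.card : ℝ) + α * (Fintype.card V : ℝ) / 2 ≤ ((outNbhd G X).card : ℝ) := by
  classical
  by_contra hcon
  push_neg at hcon
  set n := Fintype.card V with hn
  set T := outNbhd G X with hT
  set A := X \ T with hA
  set B := X ∩ T with hB
  set Q := T \ X with hQ
  set Z := (univ \ T) \ X with hZ
  obtain ⟨x₀, hx₀⟩ := hX
  have hnpos : 0 < n := Fintype.card_pos
  -- membership helper
  have hTmem : ∀ {y z : V}, y ∈ X → G y z → z ∈ T := by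
    intro y z hy hG
    rw [hT]
    simp only [outNbhd, Finset.mem_filter, Finset.mem_univ, true_and]
    exact ⟨y, hy, hG⟩
  -- cardinality relations
  have hab : A.card + B.card = X.card := Finset.card_sdiff_add_card_inter X T
  have hbq : B.card + Q.card = T.card := by
    rw [hB, hQ, Finset.inter_comm]
    exact Finset.card_inter_add_card_sdiff T X
  have htn : T.card ≤ n := by rw [hn, ← Finset.card_univ]; exact Finset.card_le_univ T
  have hXn : X.card ≤ n := by rw [hn, ← Finset.card_univ]; exact Finset.card_le_univ X
  have hzt : Z.card + A.card + T.card = n := by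
    have h1 : (univ \ T).card = n - T.card := by
      rw [Finset.card_univ_diff]
    have hAeq : (univ \ T) ∩ X = A := by
      ext v
      simp only [hA, Finset.mem_inter, Finset.mem_sdiff, Finset.mem_univ, true_and]
      tauto
    have h2 : Z.card + A.card = (univ \ T).card := by
      rw [hZ, ← hAeq]
      exact Finset.card_sdiff_add_card_inter (univ \ T) X
    omega
  -- min degree facts
  have hdle : ∀ v, minDeg G ≤ deg G v := fun v => Finset.inf'_le _ (Finset.mem_univ v)
  have hple : ∀ v, minOutDeg G ≤ outDeg G v := fun v => Finset.inf'_le _ (Finset.mem_univ v)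
  have hmle : ∀ v, minInDeg G ≤ inDeg G v := fun v => Finset.inf'_le _ (Finset.mem_univ v)
  -- G1 : minDeg G < n
  have hG1 : minDeg G < n := by
    have hsub : (univ.filter fun y => G x₀ y ∨ G y x₀) ⊆ univ.erase x₀ := by
      intro z hz
      simp only [Finset.mem_filter, Finset.mem_univ, true_and] at hz
      refine Finset.mem_erase.2 ⟨?_, Finset.mem_univ z⟩
      rintro rfl
      rcases hz with h | h <;> exact hor.1 _ h
    have := Finset.card_le_card hsub
    rw [Finset.card_erase_of_mem (Finset.mem_univ x₀), Finset.card_univ] at this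
    have hd := hdle x₀
    rw [deg] at hd
    omega
  -- G2 : minOutDeg G ≤ T.card
  have hG2 : minOutDeg G ≤ T.card := by
    have hsub : (univ.filter fun y => G x₀ y) ⊆ T := by
      intro z hz
      simp only [Finset.mem_filter, Finset.mem_univ, true_and] at hz
      exact hTmem hx₀ hz
    have := Finset.card_le_card hsub
    have hp := hple x₀
    rw [outDeg] at hp
    omega
  -- counting fact for B (out-side)
  have hL3 : 0 < B.card → 2 * minOutDeg G + 1 ≤ B.card + 2 * Q.card := by
    intro hbpos
    have hk : ∀ y ∈ B, minOutDeg G ≤ (B.filter fun z => G y z).card + Q.card := by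
      intro y hy
      have hyX : y ∈ X := (Finset.mem_inter.1 hy).1
      have hsub : (univ.filter fun z => G y z) ⊆ (B.filter fun z => G y z) ∪ Q := by
        intro z hz
        simp only [Finset.mem_filter, Finset.mem_univ, true_and] at hz
        have hzT : z ∈ T := hTmem hyX hz
        by_cases hzX : z ∈ X
        · exact Finset.mem_union.2 (Or.inl (Finset.mem_filter.2
            ⟨Finset.mem_inter.2 ⟨hzX, hzT⟩, hz⟩))
        · exact Finset.mem_union.2 (Or.inr (Finset.mem_sdiff.2 ⟨hzT, hzX⟩))
      have h1 := Finset.card_le_card hsub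
      have h2 := Finset.card_union_le (B.filter fun z => G y z) Q
      have hp := hple y
      rw [outDeg] at hp
      omega
    have := keyCount G hor B Q (minOutDeg G) hk
    exact Nat.le_of_mul_le_mul_left this hbpos
  -- counting fact for Z (in-side)
  have hL4 : 0 < Z.card → 2 * minInDeg G + 1 ≤ Z.card + 2 * Q.card := by
    intro hzpos
    have hor' : Oriented (fun x y => G y x) := ⟨hor.1, fun x y h => hor.2 y x h⟩
    have hk : ∀ w ∈ Z, minInDeg G ≤ (Z.filter fun y => G y w).card + Q.card := by
      intro w hw
      have hwT : w ∉ T := by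
        have := (Finset.mem_sdiff.1 hw).1
        exact (Finset.mem_sdiff.1 this).2
      have hsub : (univ.filter fun y => G y w) ⊆ (Z.filter fun y => G y w) ∪ Q := by
        intro y hy
        simp only [Finset.mem_filter, Finset.mem_univ, true_and] at hy
        have hyX : y ∉ X := fun hyX => hwT (hTmem hyX hy)
        by_cases hyT : y ∈ T
        · exact Finset.mem_union.2 (Or.inr (Finset.mem_sdiff.2 ⟨hyT, hyX⟩))
        · refine Finset.mem_union.2 (Or.inl (Finset.mem_filter.2 ⟨?_, hy⟩))
          rw [hZ]
          exact Finset.mem_sdiff.2 ⟨Finset.mem_sdiff.2 ⟨Finset.mem_univ y, hyT⟩, hyX⟩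
      have h1 := Finset.card_le_card hsub
      have h2 := Finset.card_union_le (Z.filter fun y => G y w) Q
      have hm := hmle w
      rw [inDeg] at hm
      omega
    have := keyCount (fun x y => G y x) hor' Z Q (minInDeg G) hk
    exact Nat.le_of_mul_le_mul_left this hzpos
  -- facts when A is nonempty
  have hG56 : 0 < A.card → minDeg G + A.card ≤ n ∧ minInDeg G + X.card ≤ n := by
    intro hapos
    obtain ⟨v, hv⟩ := Finset.card_pos.1 hapos
    have hvX : v ∈ X := (Finset.mem_sdiff.1 hv).1
    have hvT : v ∉ T := (Finset.mem_sdiff.1 hv).2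
    constructor
    · have hsub : (univ.filter fun y => G v y ∨ G y v) ⊆ univ \ A := by
        intro z hz
        simp only [Finset.mem_filter, Finset.mem_univ, true_and] at hz
        refine Finset.mem_sdiff.2 ⟨Finset.mem_univ z, ?_⟩
        intro hzA
        have hzX : z ∈ X := (Finset.mem_sdiff.1 hzA).1
        have hzT : z ∉ T := (Finset.mem_sdiff.1 hzA).2
        rcases hz with h | h
        · exact hzT (hTmem hvX h)
        · exact hvT (hTmem hzX h)
      have h1 := Finset.card_le_card hsub
      rw [Finset.card_univ_diff] at h1
      have hd := hdle v
      rw [deg] at hd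
      have hAn : A.card ≤ n := by rw [hn, ← Finset.card_univ]; exact Finset.card_le_univ A
      omega
    · have hsub : (univ.filter fun y => G y v) ⊆ univ \ X := by
        intro z hz
        simp only [Finset.mem_filter, Finset.mem_univ, true_and] at hz
        refine Finset.mem_sdiff.2 ⟨Finset.mem_univ z, fun hzX => hvT (hTmem hzX hz)⟩
      have h1 := Finset.card_le_card hsub
      rw [Finset.card_univ_diff] at h1
      have hm := hmle v
      rw [inDeg] at hm
      omega
  -- pass to the reals
  have hs1 : 1 ≤ X.card := Finset.card_pos.2 ⟨x₀, hx₀⟩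
  have hnR : (1:ℝ) ≤ (n:ℝ) := by exact_mod_cast hnpos
  have hαn : 0 < α * (n:ℝ) := mul_pos hα (by linarith)
  have habR : (A.card:ℝ) + B.card = X.card := by exact_mod_cast hab
  have hbqR : (B.card:ℝ) + Q.card = T.card := by exact_mod_cast hbq
  have hztR : (Z.card:ℝ) + A.card + T.card = n := by exact_mod_cast hzt
  have hG1R : (minDeg G : ℝ) + 1 ≤ n := by exact_mod_cast hG1
  have hG2R : (minOutDeg G : ℝ) ≤ T.card := by exact_mod_cast hG2
  have hs1R : (1:ℝ) ≤ X.card := by exact_mod_cast hs1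
  have hconR : (T.card : ℝ) < X.card + α * n / 2 := hcon
  -- t < n
  have htnR : (T.card : ℝ) < n := by nlinarith
  -- case analysis
  rcases Nat.eq_zero_or_pos A.card with ha0 | hapos
  · -- A empty : B = X nonempty, Z nonempty
    have hbpos : 0 < B.card := by omega
    have hzpos : 0 < Z.card := by
      have : T.card < n := by exact_mod_cast htnR
      omega
    have hl3 := hL3 hbpos
    have hl4 := hL4 hzpos
    have hl3R : 2 * (minOutDeg G : ℝ) + 1 ≤ B.card + 2 * Q.card := by exact_mod_cast hl3
    have hl4R : 2 * (minInDeg G : ℝ) + 1 ≤ Z.card + 2 * Q.card := by exact_mod_cast hl4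
    have ha0R : (A.card : ℝ) = 0 := by exact_mod_cast ha0
    linarith
  · obtain ⟨hG5, hG6⟩ := hG56 hapos
    have hG5R : (minDeg G : ℝ) + A.card ≤ n := by exact_mod_cast hG5
    have hG6R : (minInDeg G : ℝ) + X.card ≤ n := by exact_mod_cast hG6
    have hapR : (1:ℝ) ≤ A.card := by exact_mod_cast hapos
    rcases Nat.eq_zero_or_pos Z.card with hz0 | hzpos
    · -- Z empty
      have hz0R : (Z.card : ℝ) = 0 := by exact_mod_cast hz0
      rcases Nat.eq_zero_or_pos B.card with hb0 | hbpos
      · have hb0R : (B.card : ℝ) = 0 := by exact_mod_cast hb0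
        linarith
      · have hl3R : 2 * (minOutDeg G : ℝ) + 1 ≤ B.card + 2 * Q.card := by
          exact_mod_cast hL3 hbpos
        linarith
    · have hl4R : 2 * (minInDeg G : ℝ) + 1 ≤ Z.card + 2 * Q.card := by
        exact_mod_cast hL4 hzpos
      rcases Nat.eq_zero_or_pos B.card with hb0 | hbpos
      · have hb0R : (B.card : ℝ) = 0 := by exact_mod_cast hb0
        linarith
      · have hl3R : 2 * (minOutDeg G : ℝ) + 1 ≤ B.card + 2 * Q.card := by
          exact_mod_cast hL3 hbpos
        linarith
end
end

section
/- Let G be the oriented graph constructed as follows: for n = 4m + 3 with m odd, take disjoint vertex sets A, C of size m (each carrying a regular tournament), B of size m + 2, D of size m + 1; add all edges from A to B, B to C, C to D, D to A, and between B and D a bipartite tournament as regular as possible. Then every directed cycle of G contains at least as many vertices of D as of B. -/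
open Finset
open scoped Classical

noncomputable section

variable {V : Type*} [Fintype V]

/-- A directed cycle of `G`, given as a nonempty list of distinct vertices with
consecutive edges and an edge from the last back to the first vertex. -/
def IsCycleList (G : V → V → Prop) (l : List V) : Prop :=
  l ≠ [] ∧ l.Nodup ∧ l.Chain' G ∧ ∀ h : l ≠ [], G (l.getLast h) (l.head h)

/-- In Häggkvist's extremal construction, every directed cycle contains at
least as many vertices of `D` as of `B`. -/
theorem stmt9 [DecidableEq V] (m : ℕ) (hm : Odd m) (G : V → V → Prop) (hor : Oriented G)
    (A B C D : Finset V)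
    (hABd : Disjoint A B) (hACd : Disjoint A C) (hADd : Disjoint A D)
    (hBCd : Disjoint B C) (hBDd : Disjoint B D) (hCDd : Disjoint C D)
    (hcover : A ∪ B ∪ C ∪ D = univ)
    (hcardA : A.card = m) (hcardB : B.card = m + 2) (hcardC : C.card = m)
    (hcardD : D.card = m + 1)
    -- all edges from A to B, B to C, C to D and D to A:
    (hAB : ∀ a ∈ A, ∀ b ∈ B, G a b) (hBC : ∀ b ∈ B, ∀ c ∈ C, G b c)
    (hCD : ∀ c ∈ C, ∀ d ∈ D, G c d) (hDA : ∀ d ∈ D, ∀ a ∈ A, G d a)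
    -- A and C carry (regular) tournaments:
    (hAtour : ∀ a ∈ A, ∀ a' ∈ A, a ≠ a' → G a a' ∨ G a' a)
    (hAreg : ∀ a ∈ A, (A.filter fun a' => G a a').card = (m - 1) / 2)
    (hCtour : ∀ c ∈ C, ∀ c' ∈ C, c ≠ c' → G c c' ∨ G c' c)
    (hCreg : ∀ c ∈ C, (C.filter fun c' => G c c').card = (m - 1) / 2)
    -- a bipartite tournament between B and D, as regular as possible:
    (hBDtour : ∀ b ∈ B, ∀ d ∈ D, G b d ∨ G d b)
    (hBDreg : ∀ b ∈ B, (D.filter fun d => G b d).card = (m + 1) / 2)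
    -- and no other edges:
    (honly : ∀ x y, G x y →
      (x ∈ A ∧ y ∈ B) ∨ (x ∈ B ∧ y ∈ C) ∨ (x ∈ C ∧ y ∈ D) ∨ (x ∈ D ∧ y ∈ A) ∨
      (x ∈ A ∧ y ∈ A) ∨ (x ∈ C ∧ y ∈ C) ∨ (x ∈ B ∧ y ∈ D) ∨ (x ∈ D ∧ y ∈ B)) :
    ∀ l : List V, IsCycleList G l → (l.toFinset ∩ B).card ≤ (l.toFinset ∩ D).card := by
  intro l hl
  obtain ⟨hne, hnd, hch, hlast⟩ := hl
  classical
  set w : V → ℤ := fun x => (if x ∈ B then (1:ℤ) else 0) - (if x ∈ D then (1:ℤ) else 0) with hw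
  set φ : V → ℤ := fun x => if x ∈ C ∨ x ∈ D then (1:ℤ) else 0 with hφ
  have hAB' := Finset.disjoint_left.mp hABd
  have hAC' := Finset.disjoint_left.mp hACd
  have hAD' := Finset.disjoint_left.mp hADd
  have hBC' := Finset.disjoint_left.mp hBCd
  have hBD' := Finset.disjoint_left.mp hBDd
  have hCD' := Finset.disjoint_left.mp hCDd
  have key : ∀ x y, G x y → w x ≤ φ y - φ x := by
    intro x y hxy
    rcases honly x y hxy with ⟨hx,hy⟩|⟨hx,hy⟩|⟨hx,hy⟩|⟨hx,hy⟩|⟨hx,hy⟩|⟨hx,hy⟩|⟨hx,hy⟩|⟨hx,hy⟩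
    · simp [hw, hφ, hAB' hx, hAC' hx, hAD' hx, hBC' hy, hBD' hy]
    · simp [hw, hφ, hx, hy, hBC' hx, hBD' hx]
    · have h1 : x ∉ B := fun h => hBC' h hx
      have h2 : x ∉ D := hCD' hx
      simp [hw, hφ, hx, hy, h1, h2]
    · have h1 : x ∉ B := fun h => hBD' h hx
      simp [hw, hφ, hx, hAC' hy, hAD' hy, h1]
    · simp [hw, hφ, hAB' hx, hAC' hx, hAD' hx, hAB' hy, hAC' hy, hAD' hy]
    · have h1 : x ∉ B := fun h => hBC' h hx
      have h2 : x ∉ D := hCD' hx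
      simp [hw, hφ, hx, hy, h1, h2]
    · simp [hw, hφ, hx, hy, hBC' hx, hBD' hx]
    · have h1 : x ∉ B := fun h => hBD' h hx
      simp [hw, hφ, hx, hy, h1, hBC' hy, hBD' hy]
  have path : ∀ (t : List V) (x : V), List.Chain G x t →
      ((x :: t).dropLast.map w).sum ≤ φ ((x :: t).getLast (by simp)) - φ x := by
    intro t
    induction t with
    | nil => intro x _; simp
    | cons y t ih =>
      intro x hc
      replace hc : G x y ∧ List.Chain G y t := List.isChain_cons_cons.mp hc
      have h1 := key x y hc.1
      have h2 := ih y hc.2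
      have hd : (x :: y :: t).dropLast = x :: (y :: t).dropLast := rfl
      have hgl : (x :: y :: t).getLast (by simp) = (y :: t).getLast (by simp) :=
        List.getLast_cons (by simp)
      rw [hd, hgl]
      simp only [List.map_cons, List.sum_cons]
      linarith
  obtain ⟨x, t, rfl⟩ : ∃ x t, l = x :: t := by
    cases l with
    | nil => exact absurd rfl hne
    | cons x t => exact ⟨x, t, rfl⟩
  have hch' : List.Chain G x t := hch
  have hsplit : ((x :: t).map w).sum
      = ((x :: t).dropLast.map w).sum + w ((x :: t).getLast (by simp)) := by
    conv_lhs => rw [← List.dropLast_append_getLast (l := x :: t) (by simp)]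
    simp
  have hlast' := key _ _ (hlast hne)
  have hhead : (x :: t).head hne = x := rfl
  rw [hhead] at hlast'
  have htot : ((x :: t).map w).sum ≤ 0 := by
    have := path t x hch'
    rw [hsplit]; linarith
  have hsum : ((x :: t).map w).sum
      = (((x :: t).toFinset ∩ B).card : ℤ) - (((x :: t).toFinset ∩ D).card : ℤ) := by
    rw [← List.sum_toFinset _ hnd]
    rw [Finset.sum_sub_distrib]
    congr 1
    · rw [Finset.sum_ite_mem]
      simp [Finset.inter_comm]
    · rw [Finset.sum_ite_mem]
      simp [Finset.inter_comm]
  rw [hsum] at htot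
  omega
end
end

section
/- Let R* be an oriented graph on N vertices with δ(R*) + δ⁺(R*) + δ⁻(R*) ≥ (3/2 + α)N for some α > 0, and let 𝒞 be a 1-factor of R* (a partition of the vertex set into directed cycles). Define, for a vertex set X, the set X⁻ of predecessors on the cycles of 𝒞 (i.e., X⁻ = σ⁻¹(X) where σ is the permutation of V(R*) given by the 1-factor). Then for any distinct vertices x, y there exists a shifted x–y walk traversing at most 2/α cycles of 𝒞, where a shifted x–y walk is a walk of the form x a₁ C₁ b₁ a₂ C₂ b₂ … a_t C_t b_t y with C₁,…,C_t (not necessarily distinct) cycles from 𝒞, aᵢ the successor of bᵢ on Cᵢ, and x a₁, bᵢ a_{i+1}, b_t y edges of R*. -/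
open Finset
open scoped Classical

noncomputable section

variable {V : Type*} [Fintype V]

set_option linter.unusedSectionVars false
set_option maxHeartbeats 1000000

lemma sum_filter_comm (G : V → V → Prop) (P : Finset V) :
    ∑ v ∈ P, (P.filter fun w => G v w).card = ∑ w ∈ P, (P.filter fun v => G v w).card := by
  simp only [Finset.card_filter]
  exact Finset.sum_comm

lemma oriented_double_count (G : V → V → Prop) (hor : Oriented G) (P : Finset V) :
    2 * (∑ v ∈ P, (P.filter fun w => G v w).card) + P.card ≤ P.card * P.card := by
  have key : ∀ v ∈ P, (P.filter fun w => G v w).card + (P.filter fun w => G w v).card + 1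
      ≤ P.card := by
    intro v hv
    have hdisj : Disjoint (P.filter fun w => G v w) (P.filter fun w => G w v) := by
      rw [Finset.disjoint_left]
      intro w h1 h2
      exact hor.2 v w (Finset.mem_filter.mp h1).2 (Finset.mem_filter.mp h2).2
    have hsub : (P.filter fun w => G v w) ∪ (P.filter fun w => G w v) ⊆ P.erase v := by
      intro w hw
      rcases Finset.mem_union.mp hw with h | h
      · exact Finset.mem_erase.mpr ⟨fun e => hor.1 v (e ▸ (Finset.mem_filter.mp h).2),
          (Finset.mem_filter.mp h).1⟩
      · exact Finset.mem_erase.mpr ⟨fun e => hor.1 v (e ▸ (Finset.mem_filter.mp h).2),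
          (Finset.mem_filter.mp h).1⟩
    have h1 : ((P.filter fun w => G v w) ∪ (P.filter fun w => G w v)).card ≤ (P.erase v).card :=
      Finset.card_le_card hsub
    rw [Finset.card_union_of_disjoint hdisj] at h1
    have h2 : (P.erase v).card + 1 = P.card := by
      rw [Finset.card_erase_of_mem hv]
      exact Nat.succ_pred_eq_of_pos (Finset.card_pos.mpr ⟨v, hv⟩)
    omega
  have hsum := Finset.sum_le_sum key
  rw [Finset.sum_const, smul_eq_mul] at hsum
  have hcomm := sum_filter_comm G P
  simp only [Finset.sum_add_distrib, Finset.sum_const, smul_eq_mul, mul_one] at hsum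
  omega

lemma minDeg_lt_card [Nonempty V] (G : V → V → Prop) (hor : Oriented G) :
    minDeg G + 1 ≤ Fintype.card V := by
  obtain ⟨v⟩ := ‹Nonempty V›
  have hsub : (univ.filter fun z => G v z ∨ G z v) ⊆ univ.erase v := by
    intro z hz
    refine Finset.mem_erase.mpr ⟨fun e => ?_, Finset.mem_univ _⟩
    rcases (Finset.mem_filter.mp hz).2 with h | h
    · exact hor.1 v (e ▸ h)
    · exact hor.1 v (e ▸ h)
  have h1 : deg G v ≤ (univ.erase v).card := Finset.card_le_card hsub
  rw [Finset.card_erase_of_mem (Finset.mem_univ v), Finset.card_univ] at h1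
  have h2 : minDeg G ≤ deg G v := Finset.inf'_le _ (Finset.mem_univ v)
  have h3 : 0 < Fintype.card V := Fintype.card_pos
  omega

/-- Expansion: if `δ + δ⁺ + δ⁻ ≥ (3/2+α)n` then every nonempty `X` with
`|X| ≤ (1-α)n` satisfies `|N⁺(X)| ≥ |X| + αn/2`. -/
lemma expansion [Nonempty V] (G : V → V → Prop) (α : ℝ) (hα : 0 < α) (hor : Oriented G)
    (hdeg : (3 / 2 + α) * (Fintype.card V : ℝ) ≤ (minDeg G + minOutDeg G + minInDeg G : ℝ))
    (X : Finset V) (hXne : X.Nonempty)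
    (hXc : (X.card : ℝ) ≤ (1 - α) * (Fintype.card V)) :
    (X.card : ℝ) + α * (Fintype.card V) / 2 ≤ ((outNbhd G X).card : ℝ) := by
  by_contra hcon
  push_neg at hcon
  set Y := outNbhd G X with hYdef
  set A := X ∩ Y with hAdef
  set S := X \ Y with hSdef
  set B := Y \ X with hBdef
  set U := univ \ (X ∪ Y) with hUdef
  have hmemY : ∀ {v w : V}, v ∈ X → G v w → w ∈ Y := by
    intro v w hv hvw
    rw [hYdef, outNbhd, Finset.mem_filter]
    exact ⟨Finset.mem_univ _, v, hv, hvw⟩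
  -- cardinal identities
  have hcard1 : A.card + S.card = X.card := Finset.card_inter_add_card_sdiff X Y
  have hcard2 : A.card + B.card = Y.card := by
    rw [hAdef, Finset.inter_comm]
    exact Finset.card_inter_add_card_sdiff Y X
  have hcard3 : U.card + (X ∪ Y).card = Fintype.card V := by
    rw [hUdef, Finset.card_sdiff_add_card_eq_card (Finset.subset_univ _), Finset.card_univ]
  have hcard4 : (X ∪ Y).card = X.card + B.card := by
    rw [hBdef, ← Finset.union_sdiff_self_eq_union (s := X) (t := Y)]
    exact Finset.card_union_of_disjoint Finset.disjoint_sdiff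
  have hminout : ∀ v : V, minOutDeg G ≤ outDeg G v := fun v => Finset.inf'_le _ (Finset.mem_univ v)
  have hminin : ∀ v : V, minInDeg G ≤ inDeg G v := fun v => Finset.inf'_le _ (Finset.mem_univ v)
  have hmindeg : ∀ v : V, minDeg G ≤ deg G v := fun v => Finset.inf'_le _ (Finset.mem_univ v)
  -- (A1) averaged outdegree bound over A
  have hA1 : 2 * (A.card * minOutDeg G) + A.card ≤ A.card * A.card + 2 * (A.card * B.card) := by
    have hle : ∀ v ∈ A, outDeg G v ≤ (A.filter fun w => G v w).card + B.card := by
      intro v hv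
      have hsub : (univ.filter fun w => G v w) ⊆ (A.filter fun w => G v w) ∪ B := by
        intro w hw
        have hGvw : G v w := (Finset.mem_filter.mp hw).2
        have hwY : w ∈ Y := hmemY (Finset.mem_of_mem_inter_left hv) hGvw
        by_cases hwX : w ∈ X
        · exact Finset.mem_union_left _
            (Finset.mem_filter.mpr ⟨Finset.mem_inter.mpr ⟨hwX, hwY⟩, hGvw⟩)
        · exact Finset.mem_union_right _ (Finset.mem_sdiff.mpr ⟨hwY, hwX⟩)
      calc outDeg G v ≤ ((A.filter fun w => G v w) ∪ B).card := Finset.card_le_card hsub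
        _ ≤ _ := Finset.card_union_le _ _
    have hsum1 : A.card * minOutDeg G ≤ ∑ v ∈ A, outDeg G v := by
      simpa using Finset.card_nsmul_le_sum A _ _ (fun v _ => hminout v)
    have hsum2 : ∑ v ∈ A, outDeg G v
        ≤ (∑ v ∈ A, (A.filter fun w => G v w).card) + A.card * B.card := by
      calc ∑ v ∈ A, outDeg G v ≤ ∑ v ∈ A, ((A.filter fun w => G v w).card + B.card) :=
            Finset.sum_le_sum hle
        _ = _ := by rw [Finset.sum_add_distrib, Finset.sum_const, smul_eq_mul]
    have hdc := oriented_double_count G hor A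
    have h5 : A.card * minOutDeg G ≤ (∑ v ∈ A, (A.filter fun w => G v w).card) + A.card * B.card :=
      le_trans hsum1 hsum2
    omega
  -- (U1) averaged indegree bound over U
  have hU1 : 2 * (U.card * minInDeg G) + U.card ≤ U.card * U.card + 2 * (U.card * B.card) := by
    have hle : ∀ w ∈ U, inDeg G w ≤ (U.filter fun v => G v w).card + B.card := by
      intro w hw
      have hwXY : w ∉ X ∪ Y := (Finset.mem_sdiff.mp hw).2
      have hsub : (univ.filter fun v => G v w) ⊆ (U.filter fun v => G v w) ∪ B := by
        intro v hv
        have hGvw : G v w := (Finset.mem_filter.mp hv).2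
        have hvX : v ∉ X := fun hvX => hwXY (Finset.mem_union_right _ (hmemY hvX hGvw))
        by_cases hvY : v ∈ Y
        · exact Finset.mem_union_right _ (Finset.mem_sdiff.mpr ⟨hvY, hvX⟩)
        · refine Finset.mem_union_left _ (Finset.mem_filter.mpr ⟨?_, hGvw⟩)
          exact Finset.mem_sdiff.mpr ⟨Finset.mem_univ _, fun hm => by
            rcases Finset.mem_union.mp hm with h | h
            · exact hvX h
            · exact hvY h⟩
      calc inDeg G w ≤ ((U.filter fun v => G v w) ∪ B).card := Finset.card_le_card hsub
        _ ≤ _ := Finset.card_union_le _ _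
    have hsum1 : U.card * minInDeg G ≤ ∑ w ∈ U, inDeg G w := by
      simpa using Finset.card_nsmul_le_sum U _ _ (fun v _ => hminin v)
    have hsum2 : ∑ w ∈ U, inDeg G w
        ≤ (∑ v ∈ U, (U.filter fun w => G v w).card) + U.card * B.card := by
      calc ∑ w ∈ U, inDeg G w ≤ ∑ w ∈ U, ((U.filter fun v => G v w).card + B.card) :=
            Finset.sum_le_sum hle
        _ = (∑ w ∈ U, (U.filter fun v => G v w).card) + U.card * B.card := by
            rw [Finset.sum_add_distrib, Finset.sum_const, smul_eq_mul]
        _ = _ := by rw [← sum_filter_comm]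
    have hdc := oriented_double_count G hor U
    have h5 : U.card * minInDeg G ≤ (∑ v ∈ U, (U.filter fun w => G v w).card) + U.card * B.card :=
      le_trans hsum1 hsum2
    omega
  -- real versions
  have hn1 : (1 : ℝ) ≤ (Fintype.card V : ℝ) := by exact_mod_cast Fintype.card_pos
  have hαn : (0 : ℝ) < α * (Fintype.card V : ℝ) := by positivity
  have rcard1 : (A.card : ℝ) + S.card = X.card := by exact_mod_cast hcard1
  have rcard2 : (A.card : ℝ) + B.card = Y.card := by exact_mod_cast hcard2
  have rcard34 : (U.card : ℝ) + (X.card + B.card) = Fintype.card V := by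
    have := hcard4 ▸ hcard3; exact_mod_cast this
  have rA1 : 2 * ((A.card : ℝ) * minOutDeg G) + A.card
      ≤ A.card * A.card + 2 * (A.card * B.card) := by exact_mod_cast hA1
  have rU1 : 2 * ((U.card : ℝ) * minInDeg G) + U.card
      ≤ U.card * U.card + 2 * (U.card * B.card) := by exact_mod_cast hU1
  have rD1 : (minDeg G : ℝ) + 1 ≤ Fintype.card V := by exact_mod_cast minDeg_lt_card G hor
  have rXne : (1 : ℝ) ≤ X.card := by exact_mod_cast Finset.card_pos.mpr hXne
  -- divide the averaged bounds when the part is nonempty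
  have hdivA : A.Nonempty → 2 * (minOutDeg G : ℝ) + 1 ≤ A.card + 2 * B.card := by
    intro hAne
    have h1a : (1 : ℝ) ≤ A.card := by exact_mod_cast Finset.card_pos.mpr hAne
    have h0a : (0 : ℝ) < A.card := by linarith
    have hmul : (A.card : ℝ) * (2 * minOutDeg G + 1) ≤ A.card * (A.card + 2 * B.card) := by
      ring_nf; ring_nf at rA1; linarith
    exact le_of_mul_le_mul_left hmul h0a
  have hdivU : U.Nonempty → 2 * (minInDeg G : ℝ) + 1 ≤ U.card + 2 * B.card := by
    intro hUne
    have h1a : (1 : ℝ) ≤ U.card := by exact_mod_cast Finset.card_pos.mpr hUne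
    have h0a : (0 : ℝ) < U.card := by linarith
    have hmul : (U.card : ℝ) * (2 * minInDeg G + 1) ≤ U.card * (U.card + 2 * B.card) := by
      ring_nf; ring_nf at rU1; linarith
    exact le_of_mul_le_mul_left hmul h0a
  -- pointwise facts from a vertex of S
  have hSfacts : S.Nonempty →
      ((minDeg G : ℝ) + S.card ≤ Fintype.card V) ∧ ((minInDeg G : ℝ) ≤ B.card + U.card) ∧
      (A = ∅ → (minOutDeg G : ℝ) ≤ B.card) := by
    rintro ⟨w₀, hw₀⟩
    have hw₀X : w₀ ∈ X := (Finset.mem_sdiff.mp hw₀).1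
    have hw₀Y : w₀ ∉ Y := (Finset.mem_sdiff.mp hw₀).2
    refine ⟨?_, ?_, ?_⟩
    · -- deg w₀ avoids S
      have hsub : (univ.filter fun z => G w₀ z ∨ G z w₀) ⊆ univ \ S := by
        intro z hz
        refine Finset.mem_sdiff.mpr ⟨Finset.mem_univ _, fun hzS => ?_⟩
        have hzX : z ∈ X := (Finset.mem_sdiff.mp hzS).1
        have hzY : z ∉ Y := (Finset.mem_sdiff.mp hzS).2
        rcases (Finset.mem_filter.mp hz).2 with h | h
        · exact hzY (hmemY hw₀X h)
        · exact hw₀Y (hmemY hzX h)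
      have h1 : deg G w₀ ≤ (univ \ S).card := Finset.card_le_card hsub
      have h2 : (univ \ S).card + S.card = Fintype.card V := by
        rw [Finset.card_sdiff_add_card_eq_card (Finset.subset_univ _), Finset.card_univ]
      have h3 := hmindeg w₀
      have : minDeg G + S.card ≤ Fintype.card V := by omega
      exact_mod_cast this
    · -- indeg w₀ from B ∪ U only
      have hsub : (univ.filter fun v => G v w₀) ⊆ B ∪ U := by
        intro v hv
        have hGvw : G v w₀ := (Finset.mem_filter.mp hv).2
        have hvX : v ∉ X := fun hvX => hw₀Y (hmemY hvX hGvw)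
        by_cases hvY : v ∈ Y
        · exact Finset.mem_union_left _ (Finset.mem_sdiff.mpr ⟨hvY, hvX⟩)
        · refine Finset.mem_union_right _ (Finset.mem_sdiff.mpr ⟨Finset.mem_univ _, fun hm => ?_⟩)
          rcases Finset.mem_union.mp hm with h | h
          · exact hvX h
          · exact hvY h
      have h1 : inDeg G w₀ ≤ (B ∪ U).card := Finset.card_le_card hsub
      have h2 := Finset.card_union_le B U
      have h3 := hminin w₀
      have : minInDeg G ≤ B.card + U.card := by omega
      exact_mod_cast this
    · -- A empty: outdeg w₀ lands in B
      intro hAe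
      have hsub : (univ.filter fun z => G w₀ z) ⊆ B := by
        intro z hz
        have hGz : G w₀ z := (Finset.mem_filter.mp hz).2
        have hzY : z ∈ Y := hmemY hw₀X hGz
        refine Finset.mem_sdiff.mpr ⟨hzY, fun hzX => ?_⟩
        have : z ∈ A := Finset.mem_inter.mpr ⟨hzX, hzY⟩
        rw [hAe] at this
        exact absurd this (Finset.notMem_empty z)
      have h1 : outDeg G w₀ ≤ B.card := Finset.card_le_card hsub
      have h3 := hminout w₀
      have : minOutDeg G ≤ B.card := le_trans h3 h1
      exact_mod_cast this
  -- case analysis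
  rcases S.eq_empty_or_nonempty with hS | hSne
  · -- S = ∅ : X ⊆ Y
    have hs0 : (S.card : ℝ) = 0 := by rw [hS]; simp
    rcases U.eq_empty_or_nonempty with hU | hUne
    · -- everything is X ∪ Y
      have hu0 : (U.card : ℝ) = 0 := by rw [hU]; simp
      linarith [rcard1, rcard2, rcard34, hcon, hXc, hαn]
    · -- S = ∅, U ≠ ∅
      have hAne : A.Nonempty := by
        rw [Finset.nonempty_iff_ne_empty]
        intro hAe
        have : (A.card : ℝ) = 0 := by rw [hAe]; simp
        linarith [rcard1, rXne]
      have h1 := hdivA hAne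
      have h2 := hdivU hUne
      linarith [rcard1, rcard2, rcard34, hcon, hdeg, rD1, hαn]
  · -- S ≠ ∅
    obtain ⟨hSd, hSi, hSo⟩ := hSfacts hSne
    rcases U.eq_empty_or_nonempty with hU | hUne
    · have hu0 : (U.card : ℝ) = 0 := by rw [hU]; simp
      rcases A.eq_empty_or_nonempty with hA | hAne
      · have ha0 : (A.card : ℝ) = 0 := by rw [hA]; simp
        have h3 := hSo hA
        linarith [rcard1, rcard2, rcard34, hcon, hdeg, hαn, hSi]
      · have h1 := hdivA hAne
        linarith [rcard1, rcard2, rcard34, hcon, hdeg, hαn, hSi]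
    · rcases A.eq_empty_or_nonempty with hA | hAne
      · have ha0 : (A.card : ℝ) = 0 := by rw [hA]; simp
        have h3 := hSo hA
        have h2 := hdivU hUne
        linarith [rcard1, rcard2, rcard34, hcon, hdeg, hαn]
      · have h1 := hdivA hAne
        have h2 := hdivU hUne
        linarith [rcard1, rcard2, rcard34, hcon, hdeg, hαn]

lemma chain_append_single {α : Type*} {r : α → α → Prop} :
    ∀ (l : List α) (a b : α), List.Chain r a l → r (l.getLastD a) b → List.Chain r a (l ++ [b])
  | [], a, b, _, hr => List.Chain.cons hr List.Chain.nil
  | c :: l, a, b, hch, hr => by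
    rw [List.Chain, List.chain_cons] at hch
    rw [List.cons_append, List.Chain, List.chain_cons]
    exact ⟨hch.1, chain_append_single l c b hch.2 (by rwa [List.getLastD_cons] at hr)⟩


/-- Given a 1-factor (encoded by a permutation `σ` with `v → σ v` an edge
for every `v`, whose cycles are the cycles of the 1-factor), any two distinct vertices are
joined by a shifted walk traversing at most `2/α` cycles.  A shifted `x`–`y` walk entering
the cycles at `a i = σ (b i)` and leaving them at `b i` is encoded by the list
`[b 1, …, b t]`: the required edges are `x → σ (b 1)`, `b i → σ (b (i+1))` and `b t → y`
(the travel from `σ (b i)` around its cycle to `b i` is automatic). -/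
theorem stmt10 [Nonempty V] (G : V → V → Prop) (α : ℝ) (hα : 0 < α)
    (hor : Oriented G)
    (hdeg : (3 / 2 + α) * (Fintype.card V : ℝ) ≤ (minDeg G + minOutDeg G + minInDeg G : ℝ))
    (σ : Equiv.Perm V) (hσ : ∀ v, G v (σ v))
    (x y : V) (hxy : x ≠ y) :
    ∃ l : List V, (l.length : ℝ) ≤ 2 / α ∧
      List.Chain (fun u b => G u (σ b)) x l ∧ G (l.getLastD x) y := by
  classical
  have hn1 : (1 : ℝ) ≤ (Fintype.card V : ℝ) := by exact_mod_cast Fintype.card_pos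
  have hαn : (0 : ℝ) < α * (Fintype.card V : ℝ) := by positivity
  -- δ⁻ > α n
  have hdm : α * (Fintype.card V : ℝ) < (minInDeg G : ℝ) := by
    have hD : (minDeg G : ℝ) + 1 ≤ Fintype.card V := by exact_mod_cast minDeg_lt_card G hor
    -- δ⁺ average over all vertices
    have hglob : 2 * ((Fintype.card V : ℕ) * minOutDeg G) + Fintype.card V
        ≤ Fintype.card V * Fintype.card V := by
      have hdc := oriented_double_count G hor univ
      have hsum1 : (univ : Finset V).card * minOutDeg G ≤ ∑ v ∈ univ, outDeg G v := by
        have h := Finset.card_nsmul_le_sum univ (fun v => outDeg G v) (minOutDeg G)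
          (fun v _ => Finset.inf'_le _ (Finset.mem_univ v))
        rw [smul_eq_mul] at h
        exact h
      have heq : ∑ v ∈ univ, outDeg G v = ∑ v ∈ univ, ((univ : Finset V).filter fun w => G v w).card := rfl
      rw [heq] at hsum1
      rw [← Finset.card_univ]
      omega
    have hglobR : 2 * ((Fintype.card V : ℝ) * minOutDeg G) + Fintype.card V
        ≤ (Fintype.card V : ℝ) * Fintype.card V := by exact_mod_cast hglob
    have h0n : (0 : ℝ) < Fintype.card V := by linarith
    have hdp : 2 * (minOutDeg G : ℝ) + 1 ≤ Fintype.card V := by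
      have hmul : (Fintype.card V : ℝ) * (2 * minOutDeg G + 1)
          ≤ (Fintype.card V : ℝ) * Fintype.card V := by ring_nf; ring_nf at hglobR; linarith
      exact le_of_mul_le_mul_left hmul h0n
    linarith
  -- the iteration
  set f : Finset V → Finset V := fun R => R ∪ (outNbhd G R).image ⇑(σ.symm) with hfdef
  set R : ℕ → Finset V := fun i => f^[i] {x} with hRdef
  have hR0 : R 0 = {x} := rfl
  have hRsucc : ∀ i, R (i + 1) = f (R i) := fun i => Function.iterate_succ_apply' f i {x}
  -- walk extraction
  have hwalk : ∀ i, ∀ u ∈ R i, ∃ l : List V, l.length ≤ i ∧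
      List.Chain (fun u b => G u (σ b)) x l ∧ l.getLastD x = u := by
    intro i
    induction i with
    | zero =>
      intro u hu
      rw [hR0, Finset.mem_singleton] at hu
      exact ⟨[], by simp, List.Chain.nil, by simp [hu.symm]⟩
    | succ i ih =>
      intro u hu
      rw [hRsucc i] at hu
      rcases Finset.mem_union.mp hu with h | h
      · obtain ⟨l, h1, h2, h3⟩ := ih u h
        exact ⟨l, le_trans h1 (Nat.le_succ i), h2, h3⟩
      · obtain ⟨w, hw, rfl⟩ := Finset.mem_image.mp h
        obtain ⟨-, p, hp, hpw⟩ := Finset.mem_filter.mp hw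
        obtain ⟨l, h1, h2, h3⟩ := ih p hp
        refine ⟨l ++ [σ.symm w], by simpa using h1, ?_, by rw [List.getLastD_concat]⟩
        refine chain_append_single l x (σ.symm w) h2 ?_
        rw [h3]
        simpa [Equiv.apply_symm_apply] using hpw
  -- growth
  have hgrow : ∀ i, (∀ j, j < i → ((R j).card : ℝ) ≤ (1 - α) * (Fintype.card V)) →
      1 + i * (α * (Fintype.card V : ℝ) / 2) ≤ ((R i).card : ℝ) := by
    intro i
    induction i with
    | zero => intro _; simp [hR0]
    | succ i ih =>
      intro hsmall
      have hRi := ih (fun j hj => hsmall j (lt_trans hj (Nat.lt_succ_self i)))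
      have hcards : ((R i).card : ℝ) ≤ (1 - α) * (Fintype.card V) :=
        hsmall i (Nat.lt_succ_self i)
      have hiR : (0:ℝ) ≤ (i : ℝ) := Nat.cast_nonneg i
      have hpos : (0:ℝ) < (R i).card := by nlinarith
      have hRine : (R i).Nonempty := Finset.card_pos.mp (by exact_mod_cast hpos)
      have hexp := expansion G α hα hor hdeg (R i) hRine hcards
      have hsub : (outNbhd G (R i)).image ⇑(σ.symm) ⊆ R (i + 1) := by
        rw [hRsucc i]; exact Finset.subset_union_right
      have hcard : ((outNbhd G (R i)).card : ℝ) ≤ ((R (i+1)).card : ℝ) := by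
        have h1 : ((outNbhd G (R i)).image ⇑(σ.symm)).card = (outNbhd G (R i)).card :=
          Finset.card_image_of_injective _ (Equiv.injective _)
        have h2 := Finset.card_le_card hsub
        rw [h1] at h2
        exact_mod_cast h2
      push_cast
      push_cast at hRi
      nlinarith
  -- there is an index where the sets get large
  have hex : ∃ i : ℕ, (1 - α) * (Fintype.card V : ℝ) < ((R i).card : ℝ) := by
    by_contra hno
    push_neg at hno
    obtain ⟨i, hi⟩ := exists_nat_gt ((Fintype.card V : ℝ) / (α * (Fintype.card V) / 2))
    have h1 := hgrow i (fun j _ => hno j)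
    have h2 : ((R i).card : ℝ) ≤ Fintype.card V := by
      exact_mod_cast Finset.card_le_card (Finset.subset_univ (R i))
    have h3 : (0:ℝ) < α * (Fintype.card V) / 2 := by linarith
    have h4 : (Fintype.card V : ℝ) < i * (α * (Fintype.card V) / 2) := by
      rw [div_lt_iff₀ h3] at hi
      linarith
    linarith
  set i₀ := Nat.find hex with hi₀def
  have hfound : (1 - α) * (Fintype.card V : ℝ) < ((R i₀).card : ℝ) := Nat.find_spec hex
  have hmin : ∀ j, j < i₀ → ((R j).card : ℝ) ≤ (1 - α) * (Fintype.card V) := by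
    intro j hj
    have := Nat.find_min hex hj
    linarith [not_lt.mp this]
  -- i₀ ≤ 2/α
  have hi₀le : (i₀ : ℝ) ≤ 2 / α := by
    rw [le_div_iff₀ hα]
    rcases Nat.eq_zero_or_pos i₀ with h0 | hpos
    · rw [h0]; push_cast; nlinarith
    · obtain ⟨k, hik⟩ : ∃ k, i₀ = k + 1 := ⟨i₀ - 1, (Nat.succ_pred_eq_of_pos hpos).symm⟩
      have hgk := hgrow k (fun j hj => hmin j (by omega))
      have hk := hmin k (by omega)
      -- k * (αn/2) ≤ (1-α)n - 1 < (1-α)n,  so k*α*n < 2(1-α)n, so k*α < 2(1-α)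
      have h0n : (0 : ℝ) < (Fintype.card V : ℝ) := by linarith
      have hkan : (k : ℝ) * α * (Fintype.card V) < 2 * (1 - α) * (Fintype.card V) := by
        nlinarith
      have hka : (k : ℝ) * α < 2 * (1 - α) := lt_of_mul_lt_mul_right (by nlinarith) (le_of_lt h0n)
      rw [hik]
      push_cast
      nlinarith
  -- find a predecessor of y in R i₀
  have hstep : ∃ u ∈ R i₀, G u y := by
    by_contra hno
    push_neg at hno
    have hsub : (univ.filter fun v => G v y) ⊆ univ \ R i₀ := by
      intro v hv
      exact Finset.mem_sdiff.mpr ⟨Finset.mem_univ _, fun hvR =>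
        hno v hvR (Finset.mem_filter.mp hv).2⟩
    have h1 : inDeg G y ≤ (univ \ R i₀).card := Finset.card_le_card hsub
    have h2 : (univ \ R i₀).card + (R i₀).card = Fintype.card V := by
      rw [Finset.card_sdiff_add_card_eq_card (Finset.subset_univ _), Finset.card_univ]
    have h3 : minInDeg G ≤ inDeg G y := Finset.inf'_le _ (Finset.mem_univ y)
    have h4 : (minInDeg G : ℝ) + (R i₀).card ≤ Fintype.card V := by
      have : minInDeg G + (R i₀).card ≤ Fintype.card V := by omega
      exact_mod_cast this
    linarith
  obtain ⟨u, hu, hGuy⟩ := hstep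
  obtain ⟨l, hlen, hchain, hlast⟩ := hwalk i₀ u hu
  refine ⟨l, ?_, hchain, by rw [hlast]; exact hGuy⟩
  calc (l.length : ℝ) ≤ (i₀ : ℝ) := by exact_mod_cast hlen
    _ ≤ 2 / α := hi₀le
end
end

section
/- Let R* be an oriented graph on N vertices, α > 0, with the property that |N⁺(X)| ≥ |X| + αN/2 for all nonempty X ⊆ V(R*) with |X| ≤ (1−α)N, and with δ⁻(R*) > αN. Let σ be a permutation of V(R*). Define, for a vertex x, the sets X₀ := N⁺(x) and X_{i+1} := X_i ∪ N⁺(σ⁻¹(X_i)). If X₀ ≠ ∅, then for every vertex y ≠ x we have y ∈ X_{i*} where i* = ⌊2/α⌋. -/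
open Finset
open scoped Classical

noncomputable section

variable {V : Type*} [Fintype V]

/-- iterating shifted out-neighbourhoods reaches every vertex `y ≠ x`
after at most `⌊2/α⌋` steps. -/
theorem stmt11 [Nonempty V] (G : V → V → Prop) (α : ℝ) (hα : 0 < α)
    (hexp : ∀ X : Finset V, X.Nonempty → (X.card : ℝ) ≤ (1 - α) * (Fintype.card V : ℝ) →
      (X.card : ℝ) + α * (Fintype.card V : ℝ) / 2 ≤ ((outNbhd G X).card : ℝ))
    (hin : ∀ v : V, α * (Fintype.card V : ℝ) < (inDeg G v : ℝ))
    (σ : Equiv.Perm V) (x : V) (X : ℕ → Finset V)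
    (hX0 : X 0 = univ.filter fun y => G x y)
    (hXsucc : ∀ i, X (i + 1) = X i ∪ outNbhd G ((X i).image fun v => σ.symm v))
    (hne : (X 0).Nonempty) :
    ∀ y : V, y ≠ x → y ∈ X ⌊(2 : ℝ) / α⌋₊ := by

  intro y hy
  set N := Fintype.card V with hNdef
  have hN : 0 < N := Fintype.card_pos
  have hNR : (0:ℝ) < N := by exact_mod_cast hN
  -- α < 1
  have hinle : (inDeg G y : ℝ) ≤ N := by
    have : inDeg G y ≤ N := by
      simpa [inDeg, hNdef] using card_filter_le (univ : Finset V) (fun z => G z y)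
    exact_mod_cast this
  have hα1 : α < 1 := by
    have := lt_of_lt_of_le (hin y) hinle
    nlinarith
  -- monotonicity
  have hmono : ∀ i j, i ≤ j → X i ⊆ X j := by
    intro i j hij
    induction j with
    | zero => simpa [Nat.le_zero.mp hij]
    | succ j ih =>
      rcases Nat.lt_or_ge i (j+1) with h | h
      · exact (ih (Nat.lt_succ_iff.mp h)).trans (by rw [hXsucc j]; exact subset_union_left)
      · have : i = j + 1 := le_antisymm hij h
        simp [this]
  have hXne : ∀ i, (X i).Nonempty := fun i => hne.mono (hmono 0 i (Nat.zero_le _))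
  -- if X i is big, y ∈ X (i+1)
  have hstep : ∀ i, (1 - α) * N < ((X i).card : ℝ) → y ∈ X (i + 1) := by
    intro i hbig
    set S := (X i).image fun v => σ.symm v with hS
    have hcardS : S.card = (X i).card := card_image_of_injective _ σ.symm.injective
    set T := (univ : Finset V).filter fun z => G z y with hT
    have hTcard : α * N < (T.card : ℝ) := by simpa [hT, inDeg] using hin y
    have hunion : ((S ∪ T).card : ℝ) ≤ N := by
      exact_mod_cast card_le_card (subset_univ (S ∪ T))
    have hsum : (S.card : ℝ) + T.card = ((S ∪ T).card : ℝ) + ((S ∩ T).card : ℝ) := by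
      exact_mod_cast (card_union_add_card_inter S T).symm
    have hpos : (0:ℝ) < ((S ∩ T).card : ℝ) := by
      rw [hcardS] at hsum
      nlinarith
    have hpos' : 0 < (S ∩ T).card := by exact_mod_cast hpos
    obtain ⟨v, hv⟩ := card_pos.mp hpos'
    rw [mem_inter] at hv
    have hvy : G v y := by
      have := hv.2
      simp [hT] at this
      exact this
    rw [hXsucc i]
    refine mem_union_right _ ?_
    simp only [outNbhd, mem_filter, mem_univ, true_and]
    exact ⟨v, hv.1, hvy⟩
  -- growth
  have hgrow : ∀ i, (∀ j, j ≤ i → ((X j).card : ℝ) ≤ (1 - α) * N) →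
      1 + i * (α * N / 2) ≤ ((X i).card : ℝ) := by
    intro i
    induction i with
    | zero =>
      intro _
      have : 1 ≤ (X 0).card := card_pos.mpr hne
      have : (1:ℝ) ≤ ((X 0).card : ℝ) := by exact_mod_cast this
      simpa using this
    | succ i ih =>
      intro hsmall
      have h1 := ih (fun j hj => hsmall j (hj.trans (Nat.le_succ i)))
      set S := (X i).image fun v => σ.symm v with hS
      have hcardS : S.card = (X i).card := card_image_of_injective _ σ.symm.injective
      have hSne : S.Nonempty := (hXne i).image _
      have hSle : (S.card : ℝ) ≤ (1 - α) * N := by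
        rw [hcardS]; exact hsmall i (Nat.le_succ i)
      have hexp' := hexp S hSne hSle
      have hsub : outNbhd G S ⊆ X (i + 1) := by
        rw [hXsucc i]; exact subset_union_right
      have hcardle : ((outNbhd G S).card : ℝ) ≤ ((X (i+1)).card : ℝ) := by
        exact_mod_cast card_le_card hsub
      rw [hcardS] at hexp'
      push_cast
      nlinarith
  -- main argument
  set k := ⌊(2:ℝ)/α⌋₊ with hk
  have hk2 : 2 ≤ k := by
    apply Nat.le_floor
    rw [le_div_iff₀ hα]
    push_cast
    nlinarith
  have hkR : (2:ℝ)/α - 1 < (k : ℝ) := by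
    have := Nat.lt_floor_add_one ((2:ℝ)/α)
    linarith
  by_cases hbig : ∃ i, i < k ∧ (1 - α) * N < ((X i).card : ℝ)
  · obtain ⟨i, hik, hb⟩ := hbig
    exact hmono (i+1) k hik (hstep i hb)
  · push_neg at hbig
    exfalso
    have hk1 : 1 ≤ k := le_trans (by norm_num) hk2
    have hcast : ((k - 1 : ℕ) : ℝ) = (k : ℝ) - 1 := by
      push_cast [Nat.cast_sub hk1]; ring
    have hg := hgrow (k - 1) (fun j hj => hbig j (lt_of_le_of_lt hj (Nat.sub_lt hk1 one_pos)))
    have hsm := hbig (k - 1) (Nat.sub_lt hk1 one_pos)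
    rw [hcast] at hg
    have hαN : 0 < α * N / 2 := by positivity
    have : ((2:ℝ)/α - 2) * (α * N / 2) ≤ ((k:ℝ) - 1) * (α * N / 2) := by nlinarith
    have hval : ((2:ℝ)/α - 2) * (α * N / 2) = N - α * N := by
      field_simp
    nlinarith
end
end
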